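/- Let 1 ≤ p, q, r ≤ ∞ with 1/p = 1/q + 1/r, and let E, F be Banach lattices. If P : E → F is a positive weakly (q,r)-dominated m-homogeneous polynomial, u : G → E and v : F → H are positive bounded linear operators, then v ∘ P ∘ u is positive weakly (q,r)-dominated and d⁺(v ∘ P ∘ u) ≤ ‖v‖ · d⁺(P) · ‖u‖^m. -/

import Mathlib

open scoped BigOperators

section

/-- A functional on a Banach lattice is positive if it is nonnegative on the positive cone. -/
def IsPosFunc {F : Type*} [NormedAddCommGroup F] [Lattice F] [HasSolidNorm F] [IsOrderedAddMonoid F] [NormedSpace ℝ F]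
    (f : F →L[ℝ] ℝ) : Prop := ∀ y : F, 0 ≤ y → 0 ≤ f y

/-- `sup_{y** ∈ B⁺_{F**}} (∑ᵢ ⟨y_i*, y**⟩^r)^{1/r}`. -/
noncomputable def posBidualBallSup {F : Type*} [NormedAddCommGroup F] [Lattice F] [HasSolidNorm F] [IsOrderedAddMonoid F]
    [NormedSpace ℝ F] (r : ℝ) {n : ℕ} (y : Fin n → F →L[ℝ] ℝ) : ℝ :=
  ⨆ Φ : {Φ : (F →L[ℝ] ℝ) →L[ℝ] ℝ // ‖Φ‖ ≤ 1 ∧ ∀ g, IsPosFunc g → 0 ≤ Φ g},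
    (∑ i, (Φ.1 (y i)) ^ r) ^ (1 / r)

/-- `sup_{φ ∈ B⁺_{P^r(^mE)}} (∑ᵢ φ(x_i)^q)^{1/q}`: supremum over the positive part of the
unit ball of the `m`-homogeneous polynomial forms on `E` (represented by their associated
`m`-linear maps, with the polynomial sup-norm on the unit ball). -/
noncomputable def posPolyBallSup {E : Type*} [NormedAddCommGroup E] [Lattice E] [HasSolidNorm E] [IsOrderedAddMonoid E] [NormedSpace ℝ E]
    (m : ℕ) (q : ℝ) {n : ℕ} (x : Fin n → E) : ℝ :=
  ⨆ φ : {φ : ContinuousMultilinearMap ℝ (fun _ : Fin m => E) ℝ //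
      (∀ z : E, ‖z‖ ≤ 1 → |φ (fun _ => z)| ≤ 1) ∧ (∀ z : E, 0 ≤ z → 0 ≤ φ (fun _ => z))},
    (∑ i, (φ.1 (fun _ => x i)) ^ q) ^ (1 / q)

/-- The `m`-homogeneous polynomial `x ↦ M(x,…,x)` is positive weakly `(q,r)`-dominated
with constant `C`. -/
def PWDPolyC {E F : Type*} [NormedAddCommGroup E] [Lattice E] [HasSolidNorm E] [IsOrderedAddMonoid E] [NormedSpace ℝ E]
    [NormedAddCommGroup F] [Lattice F] [HasSolidNorm F] [IsOrderedAddMonoid F] [NormedSpace ℝ F] (m : ℕ) (p q r : ℝ)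
    (M : ContinuousMultilinearMap ℝ (fun _ : Fin m => E) F) (C : ℝ) : Prop :=
  ∀ (n : ℕ) (x : Fin n → E) (y : Fin n → F →L[ℝ] ℝ),
    (∀ i, 0 ≤ x i) → (∀ i, IsPosFunc (y i)) →
    (∑ i, ((y i) (M (fun _ => x i))) ^ p) ^ (1 / p) ≤
      C * posPolyBallSup m q x * posBidualBallSup r y

/-- `d⁺(P)` for the polynomial `x ↦ M(x,…,x)`. -/
noncomputable def dplusPoly {E F : Type*} [NormedAddCommGroup E] [Lattice E] [HasSolidNorm E] [IsOrderedAddMonoid E] [NormedSpace ℝ E]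
    [NormedAddCommGroup F] [Lattice F] [HasSolidNorm F] [IsOrderedAddMonoid F] [NormedSpace ℝ F] (m : ℕ) (p q r : ℝ)
    (M : ContinuousMultilinearMap ℝ (fun _ : Fin m => E) F) : ℝ :=
  sInf {C : ℝ | 0 ≤ C ∧ PWDPolyC m p q r M C}

private lemma rpow_sum_factor {n : ℕ} {c q : ℝ} (hc : 0 ≤ c) (hq : q ≠ 0) (hq0 : 0 ≤ q)
    (t : Fin n → ℝ) (ht : ∀ i, 0 ≤ t i) :
    (∑ i, (c * t i) ^ q) ^ (1 / q) = c * (∑ i, t i ^ q) ^ (1 / q) := by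
  have h1 : ∀ i : Fin n, (c * t i) ^ q = c ^ q * t i ^ q := fun i => Real.mul_rpow hc (ht i)
  simp_rw [h1, ← Finset.mul_sum]
  rw [Real.mul_rpow (Real.rpow_nonneg hc q)
    (Finset.sum_nonneg fun i _ => Real.rpow_nonneg (ht i) q),
    ← Real.rpow_mul hc, mul_one_div_cancel hq, Real.rpow_one]

private lemma poly_abs_le {E : Type*} [NormedAddCommGroup E] [Lattice E] [HasSolidNorm E] [IsOrderedAddMonoid E] [NormedSpace ℝ E]
    {m : ℕ} {φ : ContinuousMultilinearMap ℝ (fun _ : Fin m => E) ℝ}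
    (hφ : ∀ z : E, ‖z‖ ≤ 1 → |φ (fun _ => z)| ≤ 1) (w : E) :
    |φ (fun _ => w)| ≤ ‖w‖ ^ m := by
  rcases eq_or_ne w 0 with rfl | hw
  · rcases Nat.eq_zero_or_pos m with rfl | hm
    · simpa using hφ 0 (by simp)
    · have h0 : φ (fun _ => (0 : E)) = 0 := φ.map_coord_zero ⟨0, hm⟩ rfl
      simp [h0, zero_pow hm.ne']
  · have ht : 0 < ‖w‖ := norm_pos_iff.mpr hw
    have hz : ‖(‖w‖⁻¹ • w)‖ ≤ 1 := by
      rw [norm_smul, norm_inv, norm_norm, inv_mul_cancel₀ ht.ne']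
    have hkey : φ (fun _ => w) = (∏ _i : Fin m, ‖w‖) • φ (fun _ => ‖w‖⁻¹ • w) := by
      rw [← φ.map_smul_univ (fun _ => ‖w‖) (fun _ => ‖w‖⁻¹ • w)]
      simp [smul_inv_smul₀ ht.ne']
    rw [hkey]
    have hprod : (∏ _i : Fin m, ‖w‖) = ‖w‖ ^ m := by
      simp [Finset.prod_const]
    rw [hprod, smul_eq_mul, abs_mul, abs_of_nonneg (pow_nonneg ht.le m)]
    calc ‖w‖ ^ m * |φ fun _ => ‖w‖⁻¹ • w| ≤ ‖w‖ ^ m * 1 :=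
          mul_le_mul_of_nonneg_left (hφ _ hz) (pow_nonneg ht.le m)
      _ = ‖w‖ ^ m := mul_one _

private lemma posPolyBallSup_bdd {G : Type*} [NormedAddCommGroup G] [Lattice G] [HasSolidNorm G] [IsOrderedAddMonoid G] [NormedSpace ℝ G]
    (m : ℕ) {q : ℝ} (hq : 1 ≤ q) {n : ℕ} (x : Fin n → G) (hx : ∀ i, 0 ≤ x i) :
    BddAbove (Set.range fun φ : {φ : ContinuousMultilinearMap ℝ (fun _ : Fin m => G) ℝ //
      (∀ z : G, ‖z‖ ≤ 1 → |φ (fun _ => z)| ≤ 1) ∧ (∀ z : G, 0 ≤ z → 0 ≤ φ (fun _ => z))} =>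
      (∑ i, (φ.1 (fun _ => x i)) ^ q) ^ (1 / q)) := by
  have hq0 : (0:ℝ) ≤ q := zero_le_one.trans hq
  refine ⟨(∑ i, ((‖x i‖ ^ m : ℝ)) ^ q) ^ (1 / q), ?_⟩
  rintro _ ⟨⟨φ, h1, h2⟩, rfl⟩
  exact Real.rpow_le_rpow (Finset.sum_nonneg fun i _ => Real.rpow_nonneg (h2 _ (hx i)) q)
    (Finset.sum_le_sum fun i _ => Real.rpow_le_rpow (h2 _ (hx i))
      ((le_abs_self _).trans (poly_abs_le h1 (x i))) hq0) (by positivity)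

private lemma posPolyBallSup_nonneg {G : Type*} [NormedAddCommGroup G] [Lattice G] [HasSolidNorm G] [IsOrderedAddMonoid G] [NormedSpace ℝ G]
    (m : ℕ) (q : ℝ) {n : ℕ} (x : Fin n → G) (hx : ∀ i, 0 ≤ x i) :
    0 ≤ posPolyBallSup m q x :=
  Real.iSup_nonneg fun φ => Real.rpow_nonneg
    (Finset.sum_nonneg fun i _ => Real.rpow_nonneg (φ.2.2 _ (hx i)) q) _

private lemma posBidualBallSup_bdd {H : Type*} [NormedAddCommGroup H] [Lattice H] [HasSolidNorm H] [IsOrderedAddMonoid H] [NormedSpace ℝ H]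
    {r : ℝ} (hr : 1 ≤ r) {n : ℕ} (y : Fin n → H →L[ℝ] ℝ) (hy : ∀ i, IsPosFunc (y i)) :
    BddAbove (Set.range fun Φ : {Φ : (H →L[ℝ] ℝ) →L[ℝ] ℝ //
      ‖Φ‖ ≤ 1 ∧ ∀ g, IsPosFunc g → 0 ≤ Φ g} =>
      (∑ i, (Φ.1 (y i)) ^ r) ^ (1 / r)) := by
  have hr0 : (0:ℝ) ≤ r := zero_le_one.trans hr
  refine ⟨(∑ i, (‖y i‖ : ℝ) ^ r) ^ (1 / r), ?_⟩
  rintro _ ⟨⟨Φ, h1, h2⟩, rfl⟩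
  have hle : ∀ i, Φ (y i) ≤ ‖y i‖ := fun i => by
    have h := (Φ.le_opNorm (y i)).trans (mul_le_of_le_one_left (norm_nonneg _) h1)
    exact (le_abs_self _).trans (by simpa [Real.norm_eq_abs] using h)
  exact Real.rpow_le_rpow (Finset.sum_nonneg fun i _ => Real.rpow_nonneg (h2 _ (hy i)) r)
    (Finset.sum_le_sum fun i _ => Real.rpow_le_rpow (h2 _ (hy i)) (hle i) hr0) (by positivity)

private lemma posBidualBallSup_nonneg {H : Type*} [NormedAddCommGroup H] [Lattice H] [HasSolidNorm H] [IsOrderedAddMonoid H] [NormedSpace ℝ H]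
    (r : ℝ) {n : ℕ} (y : Fin n → H →L[ℝ] ℝ) (hy : ∀ i, IsPosFunc (y i)) :
    0 ≤ posBidualBallSup r y :=
  Real.iSup_nonneg fun Φ => Real.rpow_nonneg
    (Finset.sum_nonneg fun i _ => Real.rpow_nonneg (Φ.2.2 _ (hy i)) r) _

private lemma supE_le {E G : Type*} [NormedAddCommGroup E] [Lattice E] [HasSolidNorm E] [IsOrderedAddMonoid E] [NormedSpace ℝ E]
    [NormedAddCommGroup G] [Lattice G] [HasSolidNorm G] [IsOrderedAddMonoid G] [NormedSpace ℝ G]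
    (m : ℕ) {q : ℝ} (hq : 1 ≤ q) {n : ℕ} (x : Fin n → G) (hx : ∀ i, 0 ≤ x i)
    (u : G →L[ℝ] E) (hu : ∀ z : G, 0 ≤ z → 0 ≤ u z) :
    posPolyBallSup m q (fun i => u (x i)) ≤ ‖u‖ ^ m * posPolyBallSup m q x := by
  have hq0 : (0:ℝ) < q := zero_lt_one.trans_le hq
  have hne : Nonempty {φ : ContinuousMultilinearMap ℝ (fun _ : Fin m => E) ℝ //
      (∀ z : E, ‖z‖ ≤ 1 → |φ (fun _ => z)| ≤ 1) ∧ (∀ z : E, 0 ≤ z → 0 ≤ φ (fun _ => z))} :=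
    ⟨⟨0, fun z _ => by simp, fun z _ => by simp⟩⟩
  rw [posPolyBallSup]
  refine ciSup_le fun φ' => ?_
  obtain ⟨φ, h1, h2⟩ := φ'
  by_cases hc : (‖u‖ ^ m : ℝ) = 0
  · have hm : m ≠ 0 := by
      intro h; subst h; simp at hc
    have hu0 : ‖u‖ = 0 := by
      exact pow_eq_zero_iff hm |>.mp hc
    have huz : ∀ z : G, u z = 0 := fun z => by
      have h := u.le_opNorm z
      rw [hu0, zero_mul] at h
      exact norm_le_zero_iff.mp h
    have hz : ∀ i : Fin n, φ (fun _ => u (x i)) = 0 := fun i => by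
      rw [huz]
      exact φ.map_coord_zero ⟨0, Nat.pos_of_ne_zero hm⟩ rfl
    simp only [hz]
    rw [Real.zero_rpow hq0.ne', Finset.sum_const_zero,
      Real.zero_rpow (by positivity : (1/q : ℝ) ≠ 0), hc, zero_mul]
  · set c : ℝ := ‖u‖ ^ m with hcdef
    have hc0 : 0 < c := lt_of_le_of_ne (by positivity) (Ne.symm hc)
    set ψ : ContinuousMultilinearMap ℝ (fun _ : Fin m => G) ℝ :=
      c⁻¹ • (φ.compContinuousLinearMap fun _ => u) with hψdef
    have hψapp : ∀ z : G, ψ (fun _ => z) = c⁻¹ * φ (fun _ => u z) := fun z => by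
      simp [hψdef]
    have hψ1 : ∀ z : G, ‖z‖ ≤ 1 → |ψ (fun _ => z)| ≤ 1 := by
      intro z hz
      rw [hψapp, abs_mul, abs_inv, abs_of_nonneg hc0.le]
      have h2' : ‖u z‖ ≤ ‖u‖ := (u.le_opNorm z).trans (mul_le_of_le_one_right (norm_nonneg u) hz)
      have h3 : |φ (fun _ => u z)| ≤ c := (poly_abs_le h1 (u z)).trans
        (pow_le_pow_left₀ (norm_nonneg _) h2' m)
      calc c⁻¹ * |φ fun _ => u z| ≤ c⁻¹ * c :=
            mul_le_mul_of_nonneg_left h3 (inv_nonneg.mpr hc0.le)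
        _ = 1 := inv_mul_cancel₀ hc
    have hψ2 : ∀ z : G, 0 ≤ z → 0 ≤ ψ (fun _ => z) := fun z hz => by
      rw [hψapp]
      exact mul_nonneg (inv_nonneg.mpr hc0.le) (h2 _ (hu z hz))
    have hval : ∀ i : Fin n, φ (fun _ => u (x i)) = c * ψ (fun _ => x i) := fun i => by
      rw [hψapp, ← mul_assoc, mul_inv_cancel₀ hc, one_mul]
    have hψx : ∀ i, 0 ≤ ψ (fun _ => x i) := fun i => hψ2 _ (hx i)
    calc (∑ i, (φ (fun _ => u (x i))) ^ q) ^ (1 / q)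
        = c * (∑ i, (ψ (fun _ => x i)) ^ q) ^ (1 / q) := by
          simp_rw [hval]
          exact rpow_sum_factor hc0.le hq0.ne' hq0.le _ hψx
      _ ≤ c * posPolyBallSup m q x :=
          mul_le_mul_of_nonneg_left
            (le_ciSup (posPolyBallSup_bdd m hq x hx) ⟨ψ, hψ1, hψ2⟩) hc0.le

private lemma supF_le {F H : Type*} [NormedAddCommGroup F] [Lattice F] [HasSolidNorm F] [IsOrderedAddMonoid F] [NormedSpace ℝ F]
    [NormedAddCommGroup H] [Lattice H] [HasSolidNorm H] [IsOrderedAddMonoid H] [NormedSpace ℝ H]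
    {r : ℝ} (hr : 1 ≤ r) {n : ℕ} (y : Fin n → H →L[ℝ] ℝ) (hy : ∀ i, IsPosFunc (y i))
    (v : F →L[ℝ] H) (hv : ∀ z : F, 0 ≤ z → 0 ≤ v z) :
    posBidualBallSup r (fun i => (y i).comp v) ≤ ‖v‖ * posBidualBallSup r y := by
  have hr0 : (0:ℝ) < r := zero_lt_one.trans_le hr
  have hne : Nonempty {Φ : (F →L[ℝ] ℝ) →L[ℝ] ℝ // ‖Φ‖ ≤ 1 ∧ ∀ g, IsPosFunc g → 0 ≤ Φ g} :=
    ⟨⟨0, ContinuousLinearMap.opNorm_le_bound 0 zero_le_one fun g => by simp,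
      fun g _ => le_of_eq (ContinuousLinearMap.zero_apply g).symm⟩⟩
  rw [posBidualBallSup]
  refine ciSup_le fun Φ' => ?_
  obtain ⟨Φ, h1, h2⟩ := Φ'
  by_cases hv0 : ‖v‖ = 0
  · have hvz : ∀ w : F, v w = 0 := fun w => by
      have h := v.le_opNorm w
      rw [hv0, zero_mul] at h
      exact norm_le_zero_iff.mp h
    have hz : ∀ i : Fin n, Φ ((y i).comp v) = 0 := fun i => by
      have : (y i).comp v = 0 := by
        ext w; simp [hvz]
      rw [this, map_zero]
    simp only [hz]
    rw [Real.zero_rpow hr0.ne', Finset.sum_const_zero,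
      Real.zero_rpow (by positivity : (1/r : ℝ) ≠ 0), hv0, zero_mul]
  · have hvpos : 0 < ‖v‖ := lt_of_le_of_ne (norm_nonneg v) (Ne.symm hv0)
    set T : (H →L[ℝ] ℝ) →L[ℝ] (F →L[ℝ] ℝ) := (ContinuousLinearMap.compL ℝ F H ℝ).flip v with hTdef
    have hTapp : ∀ g : H →L[ℝ] ℝ, T g = g.comp v := fun g => rfl
    set Ψ : (H →L[ℝ] ℝ) →L[ℝ] ℝ := ‖v‖⁻¹ • (Φ.comp T) with hΨdef
    have hΨapp : ∀ g : H →L[ℝ] ℝ, Ψ g = ‖v‖⁻¹ * Φ (g.comp v) := fun g => by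
      simp [hΨdef, hTapp]
    have hΨ1 : ‖Ψ‖ ≤ 1 := by
      refine ContinuousLinearMap.opNorm_le_bound _ zero_le_one fun g => ?_
      rw [one_mul]
      have hb : ‖Φ (g.comp v)‖ ≤ ‖g‖ * ‖v‖ := by
        calc ‖Φ (g.comp v)‖ ≤ ‖Φ‖ * ‖g.comp v‖ := Φ.le_opNorm _
          _ ≤ 1 * (‖g‖ * ‖v‖) :=
              mul_le_mul h1 (ContinuousLinearMap.opNorm_comp_le g v) (norm_nonneg _) zero_le_one
          _ = ‖g‖ * ‖v‖ := one_mul _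
      calc ‖Ψ g‖ = ‖v‖⁻¹ * ‖Φ (g.comp v)‖ := by
            rw [hΨapp g, Real.norm_eq_abs, Real.norm_eq_abs, abs_mul, abs_inv, abs_norm]
        _ ≤ ‖v‖⁻¹ * (‖g‖ * ‖v‖) :=
            mul_le_mul_of_nonneg_left hb (inv_nonneg.mpr (norm_nonneg v))
        _ = ‖g‖ := by
            rw [mul_comm ‖g‖ ‖v‖, ← mul_assoc, inv_mul_cancel₀ hv0, one_mul]
    have hΨ2 : ∀ g, IsPosFunc g → 0 ≤ Ψ g := fun g hg => by
      rw [hΨapp]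
      exact mul_nonneg (inv_nonneg.mpr (norm_nonneg v))
        (h2 _ fun w hw => hg _ (hv w hw))
    have hval : ∀ i : Fin n, Φ ((y i).comp v) = ‖v‖ * Ψ (y i) := fun i => by
      rw [hΨapp, ← mul_assoc, mul_inv_cancel₀ hv0, one_mul]
    have hΨy : ∀ i, 0 ≤ Ψ (y i) := fun i => hΨ2 _ (hy i)
    calc (∑ i, (Φ ((y i).comp v)) ^ r) ^ (1 / r)
        = ‖v‖ * (∑ i, (Ψ (y i)) ^ r) ^ (1 / r) := by
          simp_rw [hval]
          exact rpow_sum_factor (norm_nonneg v) hr0.ne' hr0.le _ hΨy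
      _ ≤ ‖v‖ * posBidualBallSup r y :=
          mul_le_mul_of_nonneg_left
            (le_ciSup (posBidualBallSup_bdd hr y hy) ⟨Ψ, hΨ1, hΨ2⟩) (norm_nonneg v)

private lemma pwd_key {E F G H : Type*}
    [NormedAddCommGroup E] [Lattice E] [HasSolidNorm E] [IsOrderedAddMonoid E] [NormedSpace ℝ E]
    [NormedAddCommGroup F] [Lattice F] [HasSolidNorm F] [IsOrderedAddMonoid F] [NormedSpace ℝ F]
    [NormedAddCommGroup G] [Lattice G] [HasSolidNorm G] [IsOrderedAddMonoid G] [NormedSpace ℝ G]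
    [NormedAddCommGroup H] [Lattice H] [HasSolidNorm H] [IsOrderedAddMonoid H] [NormedSpace ℝ H]
    (m : ℕ) (p q r : ℝ) (hq : 1 ≤ q) (hr : 1 ≤ r)
    (M : ContinuousMultilinearMap ℝ (fun _ : Fin m => E) F)
    (u : G →L[ℝ] E) (hu : ∀ z : G, 0 ≤ z → 0 ≤ u z)
    (v : F →L[ℝ] H) (hv : ∀ z : F, 0 ≤ z → 0 ≤ v z)
    (C : ℝ) (hC0 : 0 ≤ C) (hC : PWDPolyC m p q r M C) :
    PWDPolyC m p q r ((v.compContinuousMultilinearMap M).compContinuousLinearMap (fun _ => u))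
      (‖v‖ * C * ‖u‖ ^ m) := by
  intro n x y hx hy
  have hx' : ∀ i, (0:E) ≤ u (x i) := fun i => hu _ (hx i)
  have hy' : ∀ i, IsPosFunc ((y i).comp v) := fun i w hw => hy i _ (hv w hw)
  have happ : ∀ i : Fin n, (y i)
      (((v.compContinuousMultilinearMap M).compContinuousLinearMap fun _ => u) fun _ => x i)
      = ((y i).comp v) (M fun _ => u (x i)) := fun i => by
    simp
  simp_rw [happ]
  have h0 := hC n (fun i => u (x i)) (fun i => (y i).comp v) hx' hy'
  have hA := supE_le m hq x hx u hu
  have hB := supF_le hr y hy v hv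
  have hA0 : 0 ≤ posPolyBallSup m q fun i => u (x i) := posPolyBallSup_nonneg m q _ hx'
  have hB0 : 0 ≤ posBidualBallSup r fun i => (y i).comp v :=
    posBidualBallSup_nonneg r _ hy'
  have hAx : 0 ≤ posPolyBallSup m q x := posPolyBallSup_nonneg m q x hx
  have hBy : 0 ≤ posBidualBallSup r y := posBidualBallSup_nonneg r y hy
  refine h0.trans ?_
  have h1 : C * posPolyBallSup m q (fun i => u (x i)) * posBidualBallSup r (fun i => (y i).comp v)
      ≤ (C * (‖u‖ ^ m * posPolyBallSup m q x)) * (‖v‖ * posBidualBallSup r y) := by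
    refine mul_le_mul ?_ hB hB0 (by positivity)
    exact mul_le_mul_of_nonneg_left hA hC0
  refine h1.trans (le_of_eq ?_)
  ring


/-- If `P` is a positive weakly `(q,r)`-dominated `m`-homogeneous polynomial and `u`, `v`
are positive bounded linear operators, then `v ∘ P ∘ u` is positive weakly
`(q,r)`-dominated and `d⁺(v ∘ P ∘ u) ≤ ‖v‖ · d⁺(P) · ‖u‖^m`. -/
theorem pwd_poly_comp {E F G H : Type*}
    [NormedAddCommGroup E] [Lattice E] [HasSolidNorm E] [IsOrderedAddMonoid E] [NormedSpace ℝ E] [CompleteSpace E]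
    [NormedAddCommGroup F] [Lattice F] [HasSolidNorm F] [IsOrderedAddMonoid F] [NormedSpace ℝ F] [CompleteSpace F]
    [NormedAddCommGroup G] [Lattice G] [HasSolidNorm G] [IsOrderedAddMonoid G] [NormedSpace ℝ G] [CompleteSpace G]
    [NormedAddCommGroup H] [Lattice H] [HasSolidNorm H] [IsOrderedAddMonoid H] [NormedSpace ℝ H] [CompleteSpace H]
    (m : ℕ) (p q r : ℝ) (hp : 1 ≤ p) (hq : 1 ≤ q) (hr : 1 ≤ r)
    (hpqr : 1 / p = 1 / q + 1 / r)
    (M : ContinuousMultilinearMap ℝ (fun _ : Fin m => E) F)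
    (hM : ∃ C, 0 ≤ C ∧ PWDPolyC m p q r M C)
    (u : G →L[ℝ] E) (hu : ∀ z : G, 0 ≤ z → 0 ≤ u z)
    (v : F →L[ℝ] H) (hv : ∀ z : F, 0 ≤ z → 0 ≤ v z) :
    (∃ C, 0 ≤ C ∧ PWDPolyC m p q r
        ((v.compContinuousMultilinearMap M).compContinuousLinearMap (fun _ => u)) C) ∧
      dplusPoly m p q r
          ((v.compContinuousMultilinearMap M).compContinuousLinearMap (fun _ => u)) ≤
        ‖v‖ * dplusPoly m p q r M * ‖u‖ ^ m := by
  obtain ⟨C, hC0, hC⟩ := hM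
  have hkey := pwd_key m p q r hq hr M u hu v hv
  constructor
  · exact ⟨‖v‖ * C * ‖u‖ ^ m, mul_nonneg (mul_nonneg (norm_nonneg v) hC0) (pow_nonneg (norm_nonneg u) m), hkey C hC0 hC⟩
  · set S : Set ℝ := {C : ℝ | 0 ≤ C ∧ PWDPolyC m p q r M C} with hSdef
    set N := (v.compContinuousMultilinearMap M).compContinuousLinearMap (fun _ => u) with hNdef
    set T : Set ℝ := {C : ℝ | 0 ≤ C ∧ PWDPolyC m p q r N C} with hTdef
    have hSne : S.Nonempty := ⟨C, hC0, hC⟩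
    have hTbdd : BddBelow T := ⟨0, fun t ht => ht.1⟩
    have hSbdd : BddBelow S := ⟨0, fun t ht => ht.1⟩
    have hSinf0 : 0 ≤ sInf S := le_csInf hSne fun t ht => ht.1
    have hTle : ∀ D ∈ S, sInf T ≤ ‖v‖ * D * ‖u‖ ^ m := fun D hD =>
      csInf_le hTbdd ⟨mul_nonneg (mul_nonneg (norm_nonneg v) hD.1) (pow_nonneg (norm_nonneg u) m), hkey D hD.1 hD.2⟩
    show sInf T ≤ ‖v‖ * sInf S * ‖u‖ ^ m
    refine le_of_forall_pos_le_add fun ε hε => ?_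
    by_cases hab : ‖v‖ * ‖u‖ ^ m = 0
    · have h1 : sInf T ≤ ‖v‖ * C * ‖u‖ ^ m := hTle C ⟨hC0, hC⟩
      have h2 : ‖v‖ * C * ‖u‖ ^ m = 0 := by
        rw [show ‖v‖ * C * ‖u‖ ^ m = ‖v‖ * ‖u‖ ^ m * C by ring, hab, zero_mul]
      have h3 : ‖v‖ * sInf S * ‖u‖ ^ m = 0 := by
        rw [show ‖v‖ * sInf S * ‖u‖ ^ m = ‖v‖ * ‖u‖ ^ m * sInf S by ring, hab, zero_mul]
      linarith
    · have habpos : 0 < ‖v‖ * ‖u‖ ^ m := lt_of_le_of_ne (by positivity) (Ne.symm hab)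
      have hεab : 0 < ε / (‖v‖ * ‖u‖ ^ m) := div_pos hε habpos
      obtain ⟨D, hDS, hDlt⟩ := exists_lt_of_csInf_lt hSne
        (show sInf S < sInf S + ε / (‖v‖ * ‖u‖ ^ m) by linarith)
      have h1 : sInf T ≤ ‖v‖ * D * ‖u‖ ^ m := hTle D hDS
      have h2 : ‖v‖ * ‖u‖ ^ m * D ≤ ‖v‖ * ‖u‖ ^ m * (sInf S + ε / (‖v‖ * ‖u‖ ^ m)) :=
        mul_le_mul_of_nonneg_left hDlt.le habpos.le
      have h3 : ‖v‖ * ‖u‖ ^ m * (sInf S + ε / (‖v‖ * ‖u‖ ^ m))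
          = ‖v‖ * ‖u‖ ^ m * sInf S + ε := by
        rw [mul_add, mul_div_cancel₀ _ hab]
      have h4 : ‖v‖ * D * ‖u‖ ^ m = ‖v‖ * ‖u‖ ^ m * D := by ring
      have h5 : ‖v‖ * sInf S * ‖u‖ ^ m = ‖v‖ * ‖u‖ ^ m * sInf S := by ring
      linarith


end
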